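/- arXiv:0901.1615 — 2 statements merged into one kernel-verified Lean document; each statement's English description precedes it below -/
import Mathlib

section
/- Let X be a complex Hilbert space, 0 < φ ≤ π, and let Φ be analytic on the strip Π = {s ∈ ℂ : 0 < Im s < φ} with values in X, continuous up to the closed strip, such that ‖Φ(s)‖ ≤ C for all s in the closed strip, and such that the boundary traces Φ(·) and Φ(· + iφ) belong to L²(ℝ; X). Then sup_{0 < ψ < φ} ∫_ℝ ‖Φ(r + iψ)‖² dr < ∞. -/
open Complex MeasureTheory Set Filter
open scoped Topology ENNReal

local notation "⟪" x ", " y "⟫" => @inner ℂ _ _ x y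

/-- Key step: on each truncated intermediate line the `L²` norm is controlled by `N`. -/
lemma strip_key {X : Type*} [NormedAddCommGroup X] [InnerProductSpace ℂ X] [CompleteSpace X]
    (φ : ℝ) (hφ0 : 0 < φ) (Φ : ℂ → X) (C : ℝ) (hC0 : 0 ≤ C)
    (hanal : DifferentiableOn ℂ Φ {s : ℂ | 0 < s.im ∧ s.im < φ})
    (hcont : ContinuousOn Φ {s : ℂ | 0 ≤ s.im ∧ s.im ≤ φ})
    (hbd : ∀ s : ℂ, 0 ≤ s.im → s.im ≤ φ → ‖Φ s‖ ≤ C)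
    (N : ℝ≥0∞) (hN : N ≠ ⊤)
    (hN0 : (∫⁻ r : ℝ, (‖Φ (r : ℂ)‖₊ : ℝ≥0∞) ^ 2) ≤ N)
    (hNφ : (∫⁻ r : ℝ, (‖Φ ((r : ℂ) + φ * Complex.I)‖₊ : ℝ≥0∞) ^ 2) ≤ N)
    (ψ : ℝ) (hψ : ψ ∈ Set.Ioo 0 φ) (R : ℝ) :
    (∫⁻ r in Icc (-R) R, (‖Φ ((r : ℂ) + ψ * Complex.I)‖₊ : ℝ≥0∞) ^ 2) ≤ N := by
  have hSopen : IsOpen {s : ℂ | 0 < s.im ∧ s.im < φ} := by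
    have : {s : ℂ | 0 < s.im ∧ s.im < φ} = Complex.im ⁻¹' Ioo 0 φ := rfl
    rw [this]; exact isOpen_Ioo.preimage continuous_im
  -- continuity of horizontal lines in the closed strip
  have hline : ∀ z : ℂ, 0 ≤ z.im → z.im ≤ φ → Continuous (fun r : ℝ => Φ ((r : ℂ) + z)) := by
    intro z h1 h2
    refine hcont.comp_continuous (by continuity) fun r => ?_
    simp [h1, h2]
  have hmemline : ∀ (ψ' : ℝ) (r : ℝ), 0 ≤ ψ' → ψ' ≤ φ →
      ((r : ℂ) + ψ' * Complex.I) ∈ {s : ℂ | 0 ≤ s.im ∧ s.im ≤ φ} := by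
    intro ψ' r h1 h2; simp [h1, h2]
  have hgψc : Continuous (fun r : ℝ => Φ ((r : ℂ) + ψ * Complex.I)) := by
    simpa using hline (ψ * Complex.I) (by simp [hψ.1.le]) (by simp [hψ.2.le])
  set g : ℝ → X := fun r => Φ ((r : ℂ) + ψ * Complex.I) with hg
  -- the real L² integral on the truncated line
  set I : ℝ := ∫ r in Icc (-R) R, ‖g r‖ ^ 2 with hIdef
  have hI0 : 0 ≤ I := integral_nonneg fun r => sq_nonneg _
  have hIint : IntegrableOn (fun r => ‖g r‖ ^ 2) (Icc (-R) R) :=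
    ((hgψc.norm.pow 2).integrableOn_Icc)
  have hIlin : ENNReal.ofReal I = ∫⁻ r in Icc (-R) R, (‖g r‖₊ : ℝ≥0∞) ^ 2 := by
    rw [hIdef, MeasureTheory.ofReal_integral_eq_lintegral_ofReal hIint
      (Filter.Eventually.of_forall fun r => sq_nonneg _)]
    congr 1
    ext r
    rw [← ENNReal.ofReal_coe_nnreal, coe_nnnorm, ← ENNReal.ofReal_pow (norm_nonneg _)]
  set Nr : ℝ := N.toReal with hNrdef
  have hNr0 : 0 ≤ Nr := ENNReal.toReal_nonneg
  have hNe : N = ENNReal.ofReal Nr := (ENNReal.ofReal_toReal hN).symm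
  -- It suffices to show I ≤ Nr
  suffices hINr : I ≤ Nr by
    calc (∫⁻ r in Icc (-R) R, (‖Φ ((r : ℂ) + ψ * Complex.I)‖₊ : ℝ≥0∞) ^ 2)
        = ENNReal.ofReal I := hIlin.symm
      _ ≤ ENNReal.ofReal Nr := ENNReal.ofReal_le_ofReal hINr
      _ = N := hNe.symm
  -- the auxiliary analytic function
  set F : ℂ → ℂ := fun s => ∫ r in Icc (-R) R, ⟪g r, Φ ((r : ℂ) + s)⟫ with hF
  have hμR : volume (Icc (-R) R) < ⊤ := (isCompact_Icc).measure_lt_top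
  have htwo : Real.HolderConjugate 2 2 := by constructor <;> norm_num
  have hrpow : ∀ a : ℝ≥0∞, a ^ (2:ℝ) = a ^ (2:ℕ) := fun a => by
    rw [show ((2:ℝ)) = ((2:ℕ):ℝ) by norm_num, ENNReal.rpow_natCast]
  -- boundary bound
  have hbound : ∀ z : ℂ, z.im = 0 ∨ z.im = φ → ‖F z‖ ≤ Real.sqrt I * Real.sqrt Nr := by
    intro z hz
    have hzim0 : 0 ≤ z.im := by rcases hz with h | h <;> simp [h, hφ0.le]
    have hzimφ : z.im ≤ φ := by rcases hz with h | h <;> simp [h, hφ0.le]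
    have hlz : Continuous (fun r : ℝ => Φ ((r : ℂ) + z)) := hline z hzim0 hzimφ
    have h1 : ‖F z‖ ≤ ∫ r in Icc (-R) R, ‖g r‖ * ‖Φ ((r:ℂ) + z)‖ := by
      refine (norm_integral_le_integral_norm _).trans ?_
      refine integral_mono_of_nonneg (Filter.Eventually.of_forall fun r => norm_nonneg _)
        ((hgψc.norm.mul hlz.norm).integrableOn_Icc) (Filter.Eventually.of_forall fun r => ?_)
      exact norm_inner_le_norm _ _
    -- translation estimate for the line through z
    have htrans : (∫⁻ r : ℝ, (‖Φ ((r:ℂ) + z)‖₊ : ℝ≥0∞) ^ 2) ≤ N := by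
      rcases hz with h | h
      · have hrw : ∀ r : ℝ, (r:ℂ) + z = (((r + z.re : ℝ)) : ℂ) := fun r => by
          apply Complex.ext <;> simp [h]
        calc (∫⁻ r : ℝ, (‖Φ ((r:ℂ) + z)‖₊ : ℝ≥0∞) ^ 2)
            = ∫⁻ r : ℝ, (‖Φ (((r + z.re : ℝ)) : ℂ)‖₊ : ℝ≥0∞) ^ 2 := by
              refine lintegral_congr fun r => by rw [hrw r]
          _ = ∫⁻ r : ℝ, (‖Φ ((r : ℝ) : ℂ)‖₊ : ℝ≥0∞) ^ 2 :=
              lintegral_add_right_eq_self (fun r : ℝ => (‖Φ ((r : ℝ) : ℂ)‖₊ : ℝ≥0∞) ^ 2) z.re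
          _ ≤ N := hN0
      · have hrw : ∀ r : ℝ, (r:ℂ) + z = (((r + z.re : ℝ)) : ℂ) + φ * Complex.I := fun r => by
          apply Complex.ext <;> simp [h]
        calc (∫⁻ r : ℝ, (‖Φ ((r:ℂ) + z)‖₊ : ℝ≥0∞) ^ 2)
            = ∫⁻ r : ℝ, (‖Φ ((((r + z.re : ℝ)) : ℂ) + φ * Complex.I)‖₊ : ℝ≥0∞) ^ 2 := by
              refine lintegral_congr fun r => by rw [hrw r]
          _ = ∫⁻ r : ℝ, (‖Φ (((r : ℝ) : ℂ) + φ * Complex.I)‖₊ : ℝ≥0∞) ^ 2 :=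
              lintegral_add_right_eq_self
                (fun r : ℝ => (‖Φ (((r : ℝ) : ℂ) + φ * Complex.I)‖₊ : ℝ≥0∞) ^ 2) z.re
          _ ≤ N := hNφ
    -- Cauchy–Schwarz at the level of lintegrals
    have h2 : ENNReal.ofReal (∫ r in Icc (-R) R, ‖g r‖ * ‖Φ ((r:ℂ) + z)‖)
        ≤ ENNReal.ofReal (Real.sqrt I * Real.sqrt Nr) := by
      rw [MeasureTheory.ofReal_integral_eq_lintegral_ofReal (f := fun r => ‖g r‖ * ‖Φ ((r:ℂ) + z)‖)
        ((hgψc.norm.mul hlz.norm).integrableOn_Icc)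
        (Filter.Eventually.of_forall fun r => mul_nonneg (norm_nonneg _) (norm_nonneg _))]
      have heq : (fun r : ℝ => ENNReal.ofReal (‖g r‖ * ‖Φ ((r:ℂ) + z)‖))
          = (fun r : ℝ => (‖g r‖₊ : ℝ≥0∞)) * fun r : ℝ => (‖Φ ((r:ℂ) + z)‖₊ : ℝ≥0∞) := by
        funext r
        simp [ENNReal.ofReal_mul (norm_nonneg _), ofReal_norm, enorm_eq_nnnorm]
      rw [lintegral_congr fun r => congrFun heq r]
      have hCS := ENNReal.lintegral_mul_le_Lp_mul_Lq (volume.restrict (Icc (-R) R)) htwo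
        (f := fun r : ℝ => (‖g r‖₊ : ℝ≥0∞)) (g := fun r : ℝ => (‖Φ ((r:ℂ) + z)‖₊ : ℝ≥0∞))
        (hgψc.nnnorm.aemeasurable.coe_nnreal_ennreal)
        (hlz.nnnorm.aemeasurable.coe_nnreal_ennreal)
      refine hCS.trans ?_
      have hfac1 : (∫⁻ r in Icc (-R) R, (‖g r‖₊ : ℝ≥0∞) ^ (2:ℝ)) ^ (1/(2:ℝ))
          = ENNReal.ofReal (Real.sqrt I) := by
        simp_rw [hrpow]
        rw [← hIlin, one_div, ENNReal.ofReal_rpow_of_nonneg hI0 (by norm_num),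
          Real.sqrt_eq_rpow, one_div]
      have hfac2 : (∫⁻ r in Icc (-R) R, (‖Φ ((r:ℂ) + z)‖₊ : ℝ≥0∞) ^ (2:ℝ)) ^ (1/(2:ℝ))
          ≤ ENNReal.ofReal (Real.sqrt Nr) := by
        simp_rw [hrpow]
        have hle : (∫⁻ r in Icc (-R) R, (‖Φ ((r:ℂ) + z)‖₊ : ℝ≥0∞) ^ (2:ℕ)) ≤ N :=
          le_trans (setLIntegral_le_lintegral _ _) htrans
        calc (∫⁻ r in Icc (-R) R, (‖Φ ((r:ℂ) + z)‖₊ : ℝ≥0∞) ^ (2:ℕ)) ^ (1/(2:ℝ))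
            ≤ N ^ (1/(2:ℝ)) := ENNReal.rpow_le_rpow hle (by norm_num)
          _ = ENNReal.ofReal (Real.sqrt Nr) := by
              rw [hNe, one_div, ENNReal.ofReal_rpow_of_nonneg hNr0 (by norm_num),
                Real.sqrt_eq_rpow, one_div]
      calc _ ≤ ENNReal.ofReal (Real.sqrt I) * ENNReal.ofReal (Real.sqrt Nr) :=
            mul_le_mul' hfac1.le hfac2
        _ = ENNReal.ofReal (Real.sqrt I * Real.sqrt Nr) :=
            (ENNReal.ofReal_mul (Real.sqrt_nonneg _)).symm
    have h2' : (∫ r in Icc (-R) R, ‖g r‖ * ‖Φ ((r:ℂ) + z)‖) ≤ Real.sqrt I * Real.sqrt Nr :=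
      (ENNReal.ofReal_le_ofReal_iff (mul_nonneg (Real.sqrt_nonneg _) (Real.sqrt_nonneg _))).1 h2
    linarith
  -- geometry helpers
  have him : ∀ a b : ℂ, |a.im - b.im| ≤ dist a b := fun a b => by
    rw [Complex.dist_eq, ← Complex.sub_im]; exact Complex.abs_im_le_norm _
  -- differentiability of F on the open strip
  have hderivC : ContinuousOn (deriv Φ) {s : ℂ | 0 < s.im ∧ s.im < φ} :=
    ((hanal.analyticOnNhd hSopen).deriv).continuousOn
  have hdiff : DifferentiableOn ℂ F (Complex.im ⁻¹' Ioo 0 φ) := by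
    intro s₀ hs₀
    have hs₀' : 0 < s₀.im ∧ s₀.im < φ := hs₀
    set δ : ℝ := min s₀.im (φ - s₀.im) / 2 with hδ
    have hδ0 : 0 < δ := by
      apply div_pos (lt_min hs₀'.1 (by linarith [hs₀'.2])) two_pos
    have hm1 : min s₀.im (φ - s₀.im) ≤ s₀.im := min_le_left _ _
    have hm2 : min s₀.im (φ - s₀.im) ≤ φ - s₀.im := min_le_right _ _
    have hmemx : ∀ x ∈ Metric.ball s₀ δ, x ∈ {s : ℂ | 0 < s.im ∧ s.im < φ} := by
      intro x hx
      have h1 : |x.im - s₀.im| < δ := lt_of_le_of_lt (him x s₀) (Metric.mem_ball.1 hx)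
      rw [abs_lt] at h1
      have hδ2 : 2 * δ = min s₀.im (φ - s₀.im) := by rw [hδ]; ring
      exact ⟨by linarith [h1.1, hs₀'.1], by linarith [h1.2, hs₀'.2]⟩
    have hmem : ∀ x ∈ Metric.ball s₀ δ, ∀ (r : ℝ), ∀ w ∈ Metric.ball ((r:ℂ) + x) δ,
        w ∈ {s : ℂ | 0 < s.im ∧ s.im < φ} := by
      intro x hx r w hw
      have h1 : |x.im - s₀.im| < δ := lt_of_le_of_lt (him x s₀) (Metric.mem_ball.1 hx)
      have h2 : |w.im - x.im| < δ := by
        have := lt_of_le_of_lt (him w ((r:ℂ) + x)) (Metric.mem_ball.1 hw)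
        simpa using this
      rw [abs_lt] at h1 h2
      have hδ2 : 2 * δ = min s₀.im (φ - s₀.im) := by rw [hδ]; ring
      exact ⟨by linarith [h1.1, h2.1, hs₀'.1], by linarith [h1.2, h2.2, hs₀'.2]⟩
    have key := hasDerivAt_integral_of_dominated_loc_of_deriv_le
      (μ := volume.restrict (Icc (-R) R))
      (F := fun (x : ℂ) (r : ℝ) => (⟪g r, Φ ((r:ℂ) + x)⟫ : ℂ))
      (F' := fun (x : ℂ) (r : ℝ) => (⟪g r, deriv Φ ((r:ℂ) + x)⟫ : ℂ))
      (x₀ := s₀) (bound := fun _ => C * ((2*C+1)/δ)) (Metric.ball_mem_nhds s₀ hδ0) ?_ ?_ ?_ ?_ ?_ ?_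
    · exact key.2.differentiableAt.differentiableWithinAt
    · filter_upwards [Metric.ball_mem_nhds s₀ hδ0] with x hx
      have hx' := hmemx x hx
      exact (hgψc.inner (hline x hx'.1.le hx'.2.le)).aestronglyMeasurable
    · exact (hgψc.inner (hline s₀ hs₀'.1.le hs₀'.2.le)).integrableOn_Icc
    · have hc : Continuous fun r : ℝ => deriv Φ ((r:ℂ) + s₀) := by
        refine hderivC.comp_continuous (Complex.continuous_ofReal.add continuous_const) fun r => ?_
        simpa using hs₀'
      exact (hgψc.inner hc).aestronglyMeasurable
    · refine Filter.Eventually.of_forall fun r x hx => ?_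
      have hd : ‖deriv Φ ((r:ℂ) + x)‖ ≤ (2*C+1)/δ := by
        have hsub : Metric.ball ((r:ℂ) + x) δ ⊆ {s : ℂ | 0 < s.im ∧ s.im < φ} :=
          fun w hw => hmem x hx r w hw
        refine Complex.norm_deriv_le_div_of_mapsTo_ball (hanal.mono hsub) ?_ hδ0
        intro w hw
        have hwS := hsub hw
        rw [Metric.mem_closedBall, dist_eq_norm]
        have h1 : ‖Φ w‖ ≤ C := hbd w hwS.1.le hwS.2.le
        have hcx := hmemx x hx
        have h2 : ‖Φ ((r:ℂ) + x)‖ ≤ C := hbd _ (by simpa using hcx.1.le) (by simpa using hcx.2.le)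
        calc ‖Φ w - Φ ((r:ℂ) + x)‖ ≤ ‖Φ w‖ + ‖Φ ((r:ℂ) + x)‖ := norm_sub_le _ _
          _ ≤ 2*C+1 := by linarith
      have hg1 : ‖g r‖ ≤ C := hbd _ (by simpa using hψ.1.le) (by simpa using hψ.2.le)
      calc ‖(⟪g r, deriv Φ ((r:ℂ) + x)⟫ : ℂ)‖
          ≤ ‖g r‖ * ‖deriv Φ ((r:ℂ) + x)‖ := norm_inner_le_norm _ _
        _ ≤ C * ((2*C+1)/δ) := mul_le_mul hg1 hd (norm_nonneg _) hC0
    · exact integrableOn_const hμR.ne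
    · refine Filter.Eventually.of_forall fun r x hx => ?_
      have hxS : ((r:ℂ) + x) ∈ {s : ℂ | 0 < s.im ∧ s.im < φ} := by
        have := hmemx x hx
        simpa using this
      have hΦd : HasDerivAt Φ (deriv Φ ((r:ℂ) + x)) ((r:ℂ) + x) :=
        (hanal.differentiableAt (hSopen.mem_nhds hxS)).hasDerivAt
      have hcomp : HasDerivAt (fun x : ℂ => Φ ((r:ℂ) + x)) (deriv Φ ((r:ℂ) + x)) x :=
        HasDerivAt.comp_const_add (r:ℂ) x hΦd
      exact (innerSL ℂ (g r)).hasFDerivAt.comp_hasDerivAt x hcomp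
  -- continuity of F on the closed strip
  have hFcont : ContinuousOn F {s : ℂ | 0 ≤ s.im ∧ s.im ≤ φ} := by
    intro s₀ hs₀
    refine MeasureTheory.continuousWithinAt_of_dominated ?_ ?_
      (integrableOn_const hμR.ne : Integrable (fun _ : ℝ => C * C) _) ?_
    · filter_upwards [self_mem_nhdsWithin] with x hx
      exact (hgψc.inner (hline x hx.1 hx.2)).aestronglyMeasurable
    · filter_upwards [self_mem_nhdsWithin] with x hx
      refine Filter.Eventually.of_forall fun r => ?_
      have hg1 : ‖g r‖ ≤ C := hbd _ (by simpa using hψ.1.le) (by simpa using hψ.2.le)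
      have h2 : ‖Φ ((r:ℂ) + x)‖ ≤ C := hbd _ (by simpa using hx.1) (by simpa using hx.2)
      calc ‖(⟪g r, Φ ((r:ℂ) + x)⟫ : ℂ)‖ ≤ ‖g r‖ * ‖Φ ((r:ℂ) + x)‖ := norm_inner_le_norm _ _
        _ ≤ C * C := mul_le_mul hg1 h2 (norm_nonneg _) hC0
    · refine Filter.Eventually.of_forall fun r => ?_
      have h1 : ContinuousWithinAt (fun x : ℂ => Φ ((r:ℂ) + x))
          {s : ℂ | 0 ≤ s.im ∧ s.im ≤ φ} s₀ := by
        refine ContinuousWithinAt.comp (hcont ((r:ℂ) + s₀) (by simpa using hs₀))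
          (continuousWithinAt_id.const_add _) ?_
        intro x hx
        simpa using hx
      exact continuousWithinAt_const.inner h1
  have hcl : closure (Complex.im ⁻¹' Ioo 0 φ) ⊆ {s : ℂ | 0 ≤ s.im ∧ s.im ≤ φ} := by
    refine closure_minimal ?_ ?_
    · intro z hz
      exact ⟨(hz : z.im ∈ Ioo 0 φ).1.le, (hz : z.im ∈ Ioo 0 φ).2.le⟩
    · exact isClosed_Icc.preimage continuous_im
  have hfd : DiffContOnCl ℂ F (Complex.im ⁻¹' Ioo 0 φ) := ⟨hdiff, hFcont.mono hcl⟩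
  -- global bound on F on the closed strip
  have hFbdd : ∀ z : ℂ, 0 ≤ z.im → z.im ≤ φ →
      ‖F z‖ ≤ C * C * (volume (Icc (-R) R)).toReal := by
    intro z h1 h2
    refine norm_setIntegral_le_of_norm_le_const hμR (fun r _ => ?_)
    have hg1 : ‖g r‖ ≤ C := hbd _ (by simpa using hψ.1.le) (by simpa using hψ.2.le)
    have hz2 : ‖Φ ((r:ℂ) + z)‖ ≤ C := hbd _ (by simpa using h1) (by simpa using h2)
    calc ‖(⟪g r, Φ ((r:ℂ) + z)⟫ : ℂ)‖ ≤ ‖g r‖ * ‖Φ ((r:ℂ) + z)‖ := norm_inner_le_norm _ _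
      _ ≤ C * C := mul_le_mul hg1 hz2 (norm_nonneg _) hC0
  -- Phragmén–Lindelöf
  have hle : ‖F ((ψ : ℂ) * Complex.I)‖ ≤ Real.sqrt I * Real.sqrt Nr := by
    refine PhragmenLindelof.horizontal_strip (a := 0) (b := φ) hfd ?_
      (fun w hw => hbound w (Or.inl hw)) (fun w hw => hbound w (Or.inr hw))
      (by simpa using hψ.1.le) (by simpa using hψ.2.le)
    refine ⟨0, by rw [sub_zero]; positivity, 0, ?_⟩
    rw [Asymptotics.isBigO_iff]
    refine ⟨C * C * (volume (Icc (-R) R)).toReal, ?_⟩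
    rw [Filter.eventually_inf_principal]
    refine Filter.Eventually.of_forall fun z hz => ?_
    have hz' : z.im ∈ Ioo 0 φ := hz
    simpa using hFbdd z hz'.1.le hz'.2.le
  -- evaluate F at ψ i
  have hFψ : F ((ψ : ℂ) * Complex.I) = ((I : ℝ) : ℂ) := by
    have heq : ∀ r : ℝ, (⟪g r, Φ ((r:ℂ) + (ψ : ℂ) * Complex.I)⟫ : ℂ) = ((‖g r‖ ^ 2 : ℝ) : ℂ) := by
      intro r
      rw [show Φ ((r:ℂ) + (ψ : ℂ) * Complex.I) = g r from rfl, inner_self_eq_norm_sq_to_K]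
      norm_cast
    calc F ((ψ : ℂ) * Complex.I)
        = ∫ r in Icc (-R) R, ((‖g r‖ ^ 2 : ℝ) : ℂ) := by
          rw [hF]; exact integral_congr_ae (Filter.Eventually.of_forall fun r => heq r)
      _ = ((I : ℝ) : ℂ) := by rw [hIdef]; exact integral_ofReal
  have hnorm : ‖F ((ψ : ℂ) * Complex.I)‖ = I := by
    rw [hFψ, Complex.norm_real, Real.norm_eq_abs, _root_.abs_of_nonneg hI0]
  have hfin : I ≤ Real.sqrt I * Real.sqrt Nr := by have h := hle; rwa [hnorm] at h
  nlinarith [Real.sq_sqrt hI0, Real.sq_sqrt hNr0, Real.sqrt_nonneg I, Real.sqrt_nonneg Nr,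
    sq_nonneg (Real.sqrt I - Real.sqrt Nr)]

/-- if `Φ` is analytic on the strip `0 < Im s < φ` (`0 < φ ≤ π`),
continuous and bounded on the closed strip, and its boundary traces on `ℝ` and
`ℝ + iφ` are square integrable, then the `L²` norms on intermediate lines are
uniformly bounded. -/
theorem stmt3 {X : Type*} [NormedAddCommGroup X] [InnerProductSpace ℂ X] [CompleteSpace X]
    (φ : ℝ) (hφ0 : 0 < φ) (hφπ : φ ≤ Real.pi) (Φ : ℂ → X) (C : ℝ)
    (hanal : DifferentiableOn ℂ Φ {s : ℂ | 0 < s.im ∧ s.im < φ})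
    (hcont : ContinuousOn Φ {s : ℂ | 0 ≤ s.im ∧ s.im ≤ φ})
    (hbd : ∀ s : ℂ, 0 ≤ s.im → s.im ≤ φ → ‖Φ s‖ ≤ C)
    (h0 : (∫⁻ r : ℝ, (‖Φ (r : ℂ)‖₊ : ℝ≥0∞) ^ 2) < ⊤)
    (hφL : (∫⁻ r : ℝ, (‖Φ ((r : ℂ) + φ * Complex.I)‖₊ : ℝ≥0∞) ^ 2) < ⊤) :
    ∃ M : ℝ, ∀ ψ ∈ Set.Ioo 0 φ,
      ∫⁻ r : ℝ, (‖Φ ((r : ℂ) + ψ * Complex.I)‖₊ : ℝ≥0∞) ^ 2 ≤ ENNReal.ofReal M := by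
  have hC0 : 0 ≤ C := le_trans (norm_nonneg (Φ 0)) (hbd 0 le_rfl (by simp [hφ0.le]))
  set N : ℝ≥0∞ := max (∫⁻ r : ℝ, (‖Φ (r : ℂ)‖₊ : ℝ≥0∞) ^ 2)
      (∫⁻ r : ℝ, (‖Φ ((r : ℂ) + φ * Complex.I)‖₊ : ℝ≥0∞) ^ 2) with hNdef
  have hNlt : N < ⊤ := max_lt h0 hφL
  refine ⟨N.toReal, fun ψ hψ => ?_⟩
  rw [ENNReal.ofReal_toReal hNlt.ne]
  have hU : (⋃ n : ℕ, Icc (-(n:ℝ)) (n:ℝ)) = univ := by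
    refine eq_univ_of_forall fun x => mem_iUnion.2 ⟨⌈|x|⌉₊, ?_⟩
    exact abs_le.1 (Nat.le_ceil _)
  have hdir : Directed (· ⊆ ·) fun n : ℕ => Icc (-(n:ℝ)) (n:ℝ) := by
    refine (Monotone.directed_le ?_)
    intro m n h
    exact Icc_subset_Icc (neg_le_neg (Nat.cast_le.2 h)) (Nat.cast_le.2 h)
  calc (∫⁻ r : ℝ, (‖Φ ((r : ℂ) + ψ * Complex.I)‖₊ : ℝ≥0∞) ^ 2)
      = ∫⁻ r in ⋃ n : ℕ, Icc (-(n:ℝ)) (n:ℝ),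
          (‖Φ ((r : ℂ) + ψ * Complex.I)‖₊ : ℝ≥0∞) ^ 2 := by
        rw [hU, Measure.restrict_univ]
    _ = ⨆ n : ℕ, ∫⁻ r in Icc (-(n:ℝ)) (n:ℝ),
          (‖Φ ((r : ℂ) + ψ * Complex.I)‖₊ : ℝ≥0∞) ^ 2 :=
        setLIntegral_iUnion_of_directed _ hdir
    _ ≤ N := iSup_le fun n => strip_key φ hφ0 Φ C hC0 hanal hcont hbd N hNlt.ne
        (le_max_left _ _) (le_max_right _ _) ψ hψ (n:ℝ)
end

section
/- Let X be a complex Hilbert space, φ ∈ (0, π], and let F ∈ H⁰(K^φ; X) be a function in the Hardy class of the double-napped cone K^φ = {e^{-iψ}t : t ∈ ℝ∖{0}, 0 < ψ < φ} (analytic with uniformly bounded L² norms on the lines e^{-iψ}ℝ, 0 < ψ < φ) that vanishes identically on the upper nappe K^{φ,+} = {z ∈ K^φ : Im z > 0}. Then there exists a single analytic function ℱ : ⋃_{0<ψ<φ} e^{iψ}ℂ⁻ → X such that for every ψ ∈ (0, φ), the restriction of ℱ to the line e^{iψ}ℝ equals (almost everywhere) the inverse Fourier-Laplace transform along e^{-iψ}ℝ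 of the restriction of F to e^{-iψ}ℝ: ℱ(λ) = (1/√(2π)) ∫_{e^{-iψ}ℝ⁺} e^{-iλz} F(z) dz. -/
open Complex MeasureTheory Set Filter
open scoped Topology ENNReal

/-- The double-napped cone `K^φ = {e^{-iψ}t : t ∈ ℝ∖{0}, 0 < ψ < φ}`. -/
def doubleConeDown (φ : ℝ) : Set ℂ :=
  {z : ℂ | ∃ t : ℝ, t ≠ 0 ∧ ∃ ψ ∈ Set.Ioo 0 φ, z = (t : ℂ) * Complex.exp (-Complex.I * ψ)}

noncomputable def eS (ψ : ℝ) : ℂ := Complex.exp (-Complex.I * ψ)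

lemma abs_eS (ψ : ℝ) : ‖eS ψ‖ = 1 := by
  rw [eS, Complex.norm_exp]
  simp

lemma eS_ne_zero (ψ : ℝ) : eS ψ ≠ 0 := Complex.exp_ne_zero _

lemma eS_eq (ψ : ℝ) : eS ψ = (Real.cos ψ : ℂ) - (Real.sin ψ : ℂ) * Complex.I := by
  rw [eS, show -Complex.I * (ψ:ℂ) = ((-ψ : ℝ) : ℂ) * Complex.I by push_cast; ring,
    Complex.exp_mul_I, ← Complex.ofReal_cos, ← Complex.ofReal_sin]
  push_cast
  simp [sub_eq_add_neg]

lemma im_eS_mul (ψ : ℝ) (l : ℂ) :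
    (eS ψ * l).im = Real.cos ψ * l.im - Real.sin ψ * l.re := by
  rw [eS_eq]
  simp [Complex.mul_im, Complex.sub_re, Complex.sub_im, Complex.cos_ofReal_re,
    Complex.sin_ofReal_re]
  ring

/-- key trig positivity lemma -/
lemma m_neg_of_between {l : ℂ} {ψ₁ ψ ψ₂ : ℝ} (h1 : ψ₁ ≤ ψ) (h2 : ψ ≤ ψ₂)
    (hlt : ψ₂ - ψ₁ < Real.pi)
    (hm1 : (eS ψ₁ * l).im < 0) (hm2 : (eS ψ₂ * l).im < 0) :
    (eS ψ * l).im < 0 := by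
  rcases eq_or_lt_of_le h1 with rfl | h1'
  · exact hm1
  have key : Real.sin (ψ₂ - ψ) * (eS ψ₁ * l).im + Real.sin (ψ - ψ₁) * (eS ψ₂ * l).im
      = Real.sin (ψ₂ - ψ₁) * (eS ψ * l).im := by
    rw [im_eS_mul, im_eS_mul, im_eS_mul, Real.sin_sub, Real.sin_sub, Real.sin_sub]
    ring
  have s1 : 0 < Real.sin (ψ - ψ₁) := Real.sin_pos_of_pos_of_lt_pi (by linarith) (by linarith)
  have s2 : 0 ≤ Real.sin (ψ₂ - ψ) :=
    Real.sin_nonneg_of_nonneg_of_le_pi (by linarith) (by linarith)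
  have s3 : 0 < Real.sin (ψ₂ - ψ₁) := Real.sin_pos_of_pos_of_lt_pi (by linarith) (by linarith)
  nlinarith [mul_nonpos_of_nonneg_of_nonpos s2 hm1.le, mul_neg_of_pos_of_neg s1 hm2]


lemma abs_cexp_phase (l : ℂ) (ψ t : ℝ) :
    ‖Complex.exp (-Complex.I * l * ((t:ℂ) * eS ψ))‖ =
      Real.exp (t * (eS ψ * l).im) := by
  rw [Complex.norm_exp]
  congr 1
  simp [Complex.mul_re, Complex.mul_im]
  ring

lemma norm_integrand {X : Type*} [NormedAddCommGroup X] [NormedSpace ℂ X]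
    (l : ℂ) (ψ t : ℝ) (v : X) :
    ‖(Complex.exp (-Complex.I * l * ((t:ℂ) * eS ψ)) * eS ψ) • v‖ =
      Real.exp (t * (eS ψ * l).im) * ‖v‖ := by
  rw [norm_smul, norm_mul, abs_eS,
    abs_cexp_phase, mul_one]

lemma ofReal_norm_eq_coe_nnnorm {E : Type*} [SeminormedAddCommGroup E] (a : E) :
    ENNReal.ofReal ‖a‖ = (‖a‖₊ : ℝ≥0∞) := ENNReal.ofReal_eq_coe_nnreal _

/-- Hölder-type finiteness of the weighted lintegral. -/
lemma lintegral_weight_mul_lt_top {X : Type*} [NormedAddCommGroup X]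
    {G : ℝ → X} (hG : AEStronglyMeasurable G (volume.restrict (Ioi 0)))
    {C : ℝ} (hC : ∫⁻ t in Ioi (0:ℝ), (‖G t‖₊ : ℝ≥0∞) ^ 2 ≤ ENNReal.ofReal C)
    {ρ : ℝ → ℝ} (hρ0 : ∀ t, 0 ≤ ρ t) (hρ2 : IntegrableOn (fun t => ρ t ^ 2) (Ioi 0))
    (hρm : AEMeasurable ρ (volume.restrict (Ioi 0))) :
    ∫⁻ t in Ioi (0:ℝ), ENNReal.ofReal (ρ t) * ‖G t‖₊ < ⊤ := by
  have hpq : Real.HolderConjugate 2 2 := Real.HolderConjugate.two_two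
  have h1 : AEMeasurable (fun t => ENNReal.ofReal (ρ t)) (volume.restrict (Ioi 0)) :=
    hρm.ennreal_ofReal
  have h2 : AEMeasurable (fun t => (‖G t‖₊ : ℝ≥0∞)) (volume.restrict (Ioi 0)) :=
    hG.enorm
  have holder := ENNReal.lintegral_mul_le_Lp_mul_Lq (volume.restrict (Ioi 0)) hpq h1 h2
  have hA : ∫⁻ t in Ioi (0:ℝ), (ENNReal.ofReal (ρ t)) ^ (2:ℝ) < ⊤ := by
    have : ∀ t, (ENNReal.ofReal (ρ t)) ^ (2:ℝ) = ENNReal.ofReal (ρ t ^ 2) := by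
      intro t
      rw [ENNReal.ofReal_rpow_of_nonneg (hρ0 t) (by norm_num)]
      congr 1
      rw [show (2:ℝ) = ((2:ℕ):ℝ) by norm_num, Real.rpow_natCast]
    simp_rw [this]
    calc ∫⁻ t in Ioi (0:ℝ), ENNReal.ofReal (ρ t ^ 2)
        ≤ ∫⁻ t in Ioi (0:ℝ), ‖ρ t ^ 2‖₊ := by
          refine lintegral_mono fun t => ?_
          rw [← ofReal_norm_eq_coe_nnnorm]
          exact ENNReal.ofReal_le_ofReal (le_abs_self _)
      _ < ⊤ := hρ2.2
  have hB : ∫⁻ t in Ioi (0:ℝ), (‖G t‖₊ : ℝ≥0∞) ^ (2:ℝ) < ⊤ := by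
    calc ∫⁻ t in Ioi (0:ℝ), (‖G t‖₊ : ℝ≥0∞) ^ (2:ℝ)
        = ∫⁻ t in Ioi (0:ℝ), (‖G t‖₊ : ℝ≥0∞) ^ (2:ℕ) := by
          refine lintegral_congr fun t => ?_
          rw [← ENNReal.rpow_natCast]; norm_num
      _ ≤ ENNReal.ofReal C := hC
      _ < ⊤ := ENNReal.ofReal_lt_top
  calc ∫⁻ t in Ioi (0:ℝ), ENNReal.ofReal (ρ t) * ‖G t‖₊
      ≤ (∫⁻ t in Ioi (0:ℝ), (ENNReal.ofReal (ρ t)) ^ (2:ℝ)) ^ (1/(2:ℝ)) *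
        (∫⁻ t in Ioi (0:ℝ), (‖G t‖₊ : ℝ≥0∞) ^ (2:ℝ)) ^ (1/(2:ℝ)) := holder
    _ < ⊤ := ENNReal.mul_lt_top
        (ENNReal.rpow_lt_top_of_nonneg (by norm_num) hA.ne)
        (ENNReal.rpow_lt_top_of_nonneg (by norm_num) hB.ne)

lemma integrableOn_of_bound {X : Type*} [NormedAddCommGroup X] {Y : Type*}
    [NormedAddCommGroup Y]
    {f : ℝ → Y} (hf : AEStronglyMeasurable f (volume.restrict (Ioi 0)))
    {G : ℝ → X} {ρ : ℝ → ℝ} (hρ0 : ∀ t, 0 ≤ ρ t)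
    (hbound : ∀ t ∈ Ioi (0:ℝ), ‖f t‖ ≤ ρ t * ‖G t‖)
    (hfin : ∫⁻ t in Ioi (0:ℝ), ENNReal.ofReal (ρ t) * ‖G t‖₊ < ⊤) :
    IntegrableOn f (Ioi 0) := by
  refine ⟨hf, lt_of_le_of_lt ?_ hfin⟩
  refine lintegral_mono_ae ?_
  rw [ae_restrict_iff' measurableSet_Ioi]
  filter_upwards with t ht
  rw [← ofReal_norm, ← ofReal_norm_eq_coe_nnnorm,
    ← ENNReal.ofReal_mul (hρ0 t)]
  exact ENNReal.ofReal_le_ofReal (hbound t ht)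

lemma integrableOn_exp_sq {m : ℝ} (hm : m < 0) :
    IntegrableOn (fun t => (Real.exp (m * t)) ^ 2) (Ioi (0:ℝ)) := by
  have := exp_neg_integrableOn_Ioi 0 (b := -2*m) (by linarith)
  refine this.congr_fun (fun t _ => ?_) measurableSet_Ioi
  rw [← Real.exp_nat_mul]
  ring_nf

lemma integrableOn_mul_exp_sq {m : ℝ} (hm : m < 0) :
    IntegrableOn (fun t => (t * Real.exp (m * t)) ^ 2) (Ioi (0:ℝ)) := by
  set δ := -m with hδ
  have hδ0 : 0 < δ := by simp [hδ]; linarith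
  have hbd : ∀ t ∈ Ioi (0:ℝ), ‖(t * Real.exp (m * t)) ^ 2‖ ≤ (2/δ)^2 * Real.exp (-δ * t) := by
    intro t ht
    have ht0 : 0 ≤ t := (le_of_lt ht)
    have h1 : t ≤ (2/δ) * Real.exp (δ * t / 2) := by
      have h2 := Real.add_one_le_exp (δ * t / 2)
      have h3 : δ * t / 2 ≤ Real.exp (δ * t / 2) := by linarith
      calc t = (2/δ) * (δ * t / 2) := by field_simp
        _ ≤ (2/δ) * Real.exp (δ * t / 2) := by
            exact mul_le_mul_of_nonneg_left h3 (by positivity)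
    have h4 : t^2 ≤ (2/δ)^2 * Real.exp (δ * t) := by
      have := mul_le_mul h1 h1 ht0 (by positivity)
      calc t^2 = t * t := sq t
        _ ≤ ((2/δ) * Real.exp (δ * t / 2)) * ((2/δ) * Real.exp (δ * t / 2)) := this
        _ = (2/δ)^2 * Real.exp (δ * t) := by
            rw [show (2/δ * Real.exp (δ*t/2)) * (2/δ * Real.exp (δ*t/2))
              = (2/δ)^2 * (Real.exp (δ*t/2) * Real.exp (δ*t/2)) by ring, ← Real.exp_add]
            norm_num
    rw [Real.norm_eq_abs, _root_.abs_of_nonneg (by positivity)]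
    have hexp : (t * Real.exp (m * t))^2 = t^2 * Real.exp (-2 * δ * t) := by
      rw [mul_pow, ← Real.exp_nat_mul]
      congr 2
      rw [hδ]; ring
    rw [hexp]
    calc t^2 * Real.exp (-2*δ*t) ≤ ((2/δ)^2 * Real.exp (δ*t)) * Real.exp (-2*δ*t) := by
          exact mul_le_mul_of_nonneg_right h4 (Real.exp_pos _).le
      _ = (2/δ)^2 * Real.exp (-δ * t) := by
          rw [mul_assoc, ← Real.exp_add]
          congr 2
          ring
  refine Integrable.mono' ((exp_neg_integrableOn_Ioi 0 hδ0).const_mul ((2/δ)^2)) ?_ ?_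
  · exact (Continuous.continuousOn (by continuity)).aestronglyMeasurable measurableSet_Ioi
  · rw [ae_restrict_iff' measurableSet_Ioi]
    filter_upwards with t ht
    exact hbd t ht

/-! ### change of variables along `Real.exp` -/

lemma lintegral_image_exp (g : ℝ → ℝ≥0∞) :
    ∫⁻ t in Ioi (0:ℝ), g t = ∫⁻ x : ℝ, ENNReal.ofReal (Real.exp x) * g (Real.exp x) := by
  have h := lintegral_image_eq_lintegral_abs_det_fderiv_mul volume MeasurableSet.univ
    (f := Real.exp)
    (fun x _ => (Real.hasDerivAt_exp x).hasFDerivAt.hasFDerivWithinAt)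
    Real.exp_injective.injOn g
  simpa [image_univ, Real.range_exp, ContinuousLinearMap.det_toSpanSingleton,
    abs_of_pos (Real.exp_pos _)] using h

lemma integral_image_exp {X : Type*} [NormedAddCommGroup X] [NormedSpace ℝ X]
    (g : ℝ → X) :
    ∫ t in Ioi (0:ℝ), g t = ∫ x : ℝ, Real.exp x • g (Real.exp x) := by
  have h := integral_image_eq_integral_abs_deriv_smul MeasurableSet.univ
    (f := Real.exp) (f' := Real.exp)
    (fun x _ => (Real.hasDerivAt_exp x).hasDerivWithinAt)
    Real.exp_injective.injOn g
  simpa [image_univ, Real.range_exp, abs_of_pos (Real.exp_pos _)] using h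

lemma integrableOn_image_exp_iff {X : Type*} [NormedAddCommGroup X] [NormedSpace ℝ X]
    (g : ℝ → X) :
    IntegrableOn g (Ioi (0:ℝ)) ↔ Integrable (fun x : ℝ => Real.exp x • g (Real.exp x)) := by
  have h := integrableOn_image_iff_integrableOn_abs_deriv_smul MeasurableSet.univ
    (f := Real.exp) (f' := Real.exp)
    (fun x _ => (Real.hasDerivAt_exp x).hasDerivWithinAt)
    Real.exp_injective.injOn g
  simp only [image_univ, Real.range_exp] at h
  rw [h]
  simp only [integrableOn_univ]
  constructor <;> intro hh <;> refine hh.congr (Filter.Eventually.of_forall fun x => ?_) <;>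
    simp [abs_of_pos (Real.exp_pos x)]

lemma mem_cone {φ ψ : ℝ} (hψ : ψ ∈ Ioo 0 φ) {t : ℝ} (ht : t ≠ 0) :
    (t : ℂ) * eS ψ ∈ doubleConeDown φ := ⟨t, ht, ψ, hψ, rfl⟩

lemma contOn_ray {X : Type*} [NormedAddCommGroup X] {φ : ℝ} {F : ℂ → X}
    (hF : ContinuousOn F (doubleConeDown φ)) {ψ : ℝ} (hψ : ψ ∈ Ioo 0 φ) :
    ContinuousOn (fun t : ℝ => F ((t : ℂ) * eS ψ)) (Ioi 0) := by
  refine hF.comp (Continuous.continuousOn (by continuity)) (fun t ht => ?_)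
  exact mem_cone hψ (ne_of_gt ht)

lemma contOn_integrand {X : Type*} [NormedAddCommGroup X] [NormedSpace ℂ X]
    {φ : ℝ} {F : ℂ → X} (hF : ContinuousOn F (doubleConeDown φ)) {ψ : ℝ}
    (hψ : ψ ∈ Ioo 0 φ) (l : ℂ) :
    ContinuousOn (fun t : ℝ =>
      (Complex.exp (-Complex.I * l * ((t:ℂ) * eS ψ)) * eS ψ) • F ((t:ℂ) * eS ψ)) (Ioi 0) :=
  (Continuous.continuousOn (by continuity)).smul (contOn_ray hF hψ)

/-- Integrability of the Fourier–Laplace integrand on the ray. -/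
lemma integrand_integrableOn {X : Type*} [NormedAddCommGroup X] [NormedSpace ℂ X]
    {φ : ℝ} {F : ℂ → X} (hF : ContinuousOn F (doubleConeDown φ)) {C : ℝ}
    (hC : ∀ ψ ∈ Ioo 0 φ, ∫⁻ t : ℝ, (‖F ((t:ℂ) * eS ψ)‖₊ : ℝ≥0∞) ^ 2 ≤ ENNReal.ofReal C)
    {ψ : ℝ} (hψ : ψ ∈ Ioo 0 φ) {l : ℂ} (hm : (eS ψ * l).im < 0) :
    IntegrableOn (fun t : ℝ =>
      (Complex.exp (-Complex.I * l * ((t:ℂ) * eS ψ)) * eS ψ) • F ((t:ℂ) * eS ψ)) (Ioi 0) := by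
  set m := (eS ψ * l).im with hmdef
  have hC' : ∫⁻ t in Ioi (0:ℝ), (‖F ((t:ℂ) * eS ψ)‖₊ : ℝ≥0∞) ^ 2 ≤ ENNReal.ofReal C :=
    le_trans (setLIntegral_le_lintegral _ _) (hC ψ hψ)
  have hGmeas : AEStronglyMeasurable (fun t : ℝ => F ((t:ℂ) * eS ψ))
      (volume.restrict (Ioi 0)) :=
    (contOn_ray hF hψ).aestronglyMeasurable measurableSet_Ioi
  refine integrableOn_of_bound
    ((contOn_integrand hF hψ l).aestronglyMeasurable measurableSet_Ioi)
    (ρ := fun t => Real.exp (m * t)) (fun t => (Real.exp_pos _).le)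
    (fun t _ => ?_) (lintegral_weight_mul_lt_top hGmeas hC'
      (fun t => (Real.exp_pos _).le) (integrableOn_exp_sq hm)
      (Real.continuous_exp.comp (continuous_const.mul continuous_id)).aemeasurable)
  rw [norm_integrand, ← hmdef, mul_comm t m]

/-- Integrability of the derivative bound on the ray. -/
lemma deriv_bound_integrableOn {X : Type*} [NormedAddCommGroup X] [NormedSpace ℂ X]
    {φ : ℝ} {F : ℂ → X} (hF : ContinuousOn F (doubleConeDown φ)) {C : ℝ}
    (hC : ∀ ψ ∈ Ioo 0 φ, ∫⁻ t : ℝ, (‖F ((t:ℂ) * eS ψ)‖₊ : ℝ≥0∞) ^ 2 ≤ ENNReal.ofReal C)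
    {ψ : ℝ} (hψ : ψ ∈ Ioo 0 φ) {m : ℝ} (hm : m < 0) :
    IntegrableOn (fun t : ℝ => (t * Real.exp (m * t)) * ‖F ((t:ℂ) * eS ψ)‖) (Ioi 0) := by
  have hC' : ∫⁻ t in Ioi (0:ℝ), (‖F ((t:ℂ) * eS ψ)‖₊ : ℝ≥0∞) ^ 2 ≤ ENNReal.ofReal C :=
    le_trans (setLIntegral_le_lintegral _ _) (hC ψ hψ)
  have hGmeas : AEStronglyMeasurable (fun t : ℝ => F ((t:ℂ) * eS ψ))
      (volume.restrict (Ioi 0)) :=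
    (contOn_ray hF hψ).aestronglyMeasurable measurableSet_Ioi
  have hρ2 : IntegrableOn (fun t : ℝ => (|t| * Real.exp (m * t)) ^ 2) (Ioi 0) := by
    refine (integrableOn_mul_exp_sq hm).congr_fun (fun t _ => ?_) measurableSet_Ioi
    simp only [mul_pow, _root_.sq_abs]
  refine integrableOn_of_bound ?_ (ρ := fun t => |t| * Real.exp (m * t))
    (fun t => by positivity) (fun t ht => ?_)
    (lintegral_weight_mul_lt_top hGmeas hC' (fun t => by positivity) hρ2
      ((continuous_abs.mul (Real.continuous_exp.comp
        (continuous_const.mul continuous_id))).aemeasurable))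
  · exact (((continuous_id.mul (Real.continuous_exp.comp
      (continuous_const.mul continuous_id))).continuousOn).mul
      (contOn_ray hF hψ).norm).aestronglyMeasurable measurableSet_Ioi
  · rw [abs_of_pos (show (0:ℝ) < t from ht), Real.norm_eq_abs,
      _root_.abs_of_nonneg (mul_nonneg (mul_nonneg (le_of_lt (mem_Ioi.mp ht))
        (Real.exp_pos _).le) (norm_nonneg _))]

/-! ### The contour deformation (consistency of the Laplace transforms along rays) -/

lemma exp_add_mul_I_eq (x ψ : ℝ) :
    Complex.exp ((x:ℂ) + ((-ψ:ℝ):ℂ) * Complex.I) = (Real.exp x : ℂ) * eS ψ := by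
  rw [Complex.exp_add, ← Complex.ofReal_exp]
  congr 1
  rw [eS]
  congr 1
  push_cast
  ring

set_option maxHeartbeats 2000000 in
lemma consistency {X : Type*} [NormedAddCommGroup X] [NormedSpace ℂ X] [CompleteSpace X]
    {φ : ℝ} (hφπ : φ ≤ Real.pi) {F : ℂ → X}
    (hanal : DifferentiableOn ℂ F (doubleConeDown φ)) {C : ℝ}
    (hC : ∀ ψ ∈ Ioo 0 φ, ∫⁻ t : ℝ, (‖F ((t:ℂ) * eS ψ)‖₊ : ℝ≥0∞) ^ 2 ≤ ENNReal.ofReal C)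
    (l : ℂ) {ψ₁ ψ₂ : ℝ} (h1 : ψ₁ ∈ Ioo 0 φ) (h2 : ψ₂ ∈ Ioo 0 φ) (h12 : ψ₁ ≤ ψ₂)
    (hm1 : (eS ψ₁ * l).im < 0) (hm2 : (eS ψ₂ * l).im < 0) :
    (∫ t in Ioi (0:ℝ), (Complex.exp (-Complex.I * l * ((t:ℂ) * eS ψ₁)) * eS ψ₁) •
        F ((t:ℂ) * eS ψ₁)) =
      ∫ t in Ioi (0:ℝ), (Complex.exp (-Complex.I * l * ((t:ℂ) * eS ψ₂)) * eS ψ₂) •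
        F ((t:ℂ) * eS ψ₂) := by
  rcases eq_or_lt_of_le h12 with rfl | hlt
  · rfl
  have hF : ContinuousOn F (doubleConeDown φ) := hanal.continuousOn
  have hπ : ψ₂ - ψ₁ < Real.pi := by
    have := h1.1; have := h2.2; linarith
  -- all intermediate angles have negative phase
  have hmall : ∀ ψ ∈ Icc ψ₁ ψ₂, (eS ψ * l).im < 0 := fun ψ hψ =>
    m_neg_of_between hψ.1 hψ.2 hπ hm1 hm2
  have hsub : Icc ψ₁ ψ₂ ⊆ Ioo 0 φ := fun ψ hψ =>
    ⟨lt_of_lt_of_le h1.1 hψ.1, lt_of_le_of_lt hψ.2 h2.2⟩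
  -- uniform negative bound
  obtain ⟨ψm, hψm, hψmax⟩ : ∃ ψm ∈ Icc ψ₁ ψ₂, ∀ ψ ∈ Icc ψ₁ ψ₂,
      (eS ψ * l).im ≤ (eS ψm * l).im := by
    have hcont : ContinuousOn (fun ψ : ℝ => (eS ψ * l).im) (Icc ψ₁ ψ₂) := by
      simp only [im_eS_mul]
      fun_prop
    obtain ⟨ψm, hψm, hmax⟩ := isCompact_Icc.exists_isMaxOn (nonempty_Icc.mpr h12) hcont
    exact ⟨ψm, hψm, fun ψ hψ => hmax hψ⟩
  set δ : ℝ := -((eS ψm * l).im) with hδdef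
  have hδ0 : 0 < δ := by
    have := hmall ψm hψm; simp only [hδdef]; linarith
  have hmδ : ∀ ψ ∈ Icc ψ₁ ψ₂, (eS ψ * l).im ≤ -δ := fun ψ hψ => by
    have := hψmax ψ hψ; simp only [hδdef]; linarith
  -- the function on the strip
  set g : ℝ → ℝ → X := fun ψ t =>
    (Complex.exp (-Complex.I * l * ((t:ℂ) * eS ψ)) * eS ψ) • F ((t:ℂ) * eS ψ) with hgdef
  set h : ℂ → X := fun w =>
    (Complex.exp (-Complex.I * l * Complex.exp w) * Complex.exp w) • F (Complex.exp w)
    with hhdef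
  have hrel : ∀ (ψ x : ℝ), h ((x:ℂ) + ((-ψ:ℝ):ℂ) * Complex.I) =
      Real.exp x • g ψ (Real.exp x) := by
    intro ψ x
    simp only [hhdef, hgdef, exp_add_mul_I_eq]
    rw [← smul_assoc]
    congr 1
    rw [Complex.real_smul]
    push_cast
    ring
  have hrel' : ∀ (y x : ℝ), h ((x:ℂ) + (y:ℂ) * Complex.I) =
      Real.exp x • g (-y) (Real.exp x) := by
    intro y x
    have := hrel (-y) x
    rw [neg_neg] at this
    exact this
  -- integrability on rays
  have hginteg : ∀ ψ ∈ Icc ψ₁ ψ₂, IntegrableOn (g ψ) (Ioi 0) := fun ψ hψ =>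
    integrand_integrableOn hF hC (hsub hψ) (hmall ψ hψ)
  -- integrability of the horizontal lines
  have hhint : ∀ ψ ∈ Icc ψ₁ ψ₂,
      Integrable (fun x : ℝ => h ((x:ℂ) + ((-ψ:ℝ):ℂ) * Complex.I)) := by
    intro ψ hψ
    have := (integrableOn_image_exp_iff (g ψ)).mp (hginteg ψ hψ)
    exact this.congr (Filter.Eventually.of_forall fun x => (hrel ψ x).symm)
  -- value on rays
  have hval : ∀ ψ ∈ Icc ψ₁ ψ₂,
      (∫ t in Ioi (0:ℝ), g ψ t) = ∫ x : ℝ, h ((x:ℂ) + ((-ψ:ℝ):ℂ) * Complex.I) := by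
    intro ψ hψ
    rw [integral_image_exp (g ψ)]
    exact integral_congr_ae (Filter.Eventually.of_forall fun x => (hrel ψ x).symm)
  -- differentiability of h on the strip
  have hmapsS : MapsTo Complex.exp {w : ℂ | w.im ∈ Icc (-ψ₂) (-ψ₁)} (doubleConeDown φ) := by
    intro w hw
    have hw' : w.im ∈ Icc (-ψ₂) (-ψ₁) := hw
    have : Complex.exp w = ((Real.exp w.re : ℝ) : ℂ) * eS (-w.im) := by
      rw [← exp_add_mul_I_eq w.re (-w.im)]
      congr 1
      simp [Complex.re_add_im]
    rw [this]
    refine mem_cone ?_ (Real.exp_pos _).ne'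
    constructor
    · have := hw'.2; have := h1.1; linarith
    · have := hw'.1; have := h2.2; linarith
  have hinner : DifferentiableOn ℂ
      (fun z : ℂ => (Complex.exp (-Complex.I * l * z) * z) • F z) (doubleConeDown φ) := by
    refine DifferentiableOn.smul ?_ hanal
    exact (((differentiable_const _).mul differentiable_id).cexp.mul
      differentiable_id).differentiableOn
  have hhdiff : DifferentiableOn ℂ h {w : ℂ | w.im ∈ Icc (-ψ₂) (-ψ₁)} :=
    hinner.comp Complex.differentiable_exp.differentiableOn hmapsS
  have hhcont : ContinuousOn h {w : ℂ | w.im ∈ Icc (-ψ₂) (-ψ₁)} := hhdiff.continuousOn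
  -- rectangle contour identity
  have hrect : ∀ u₁ u₂ : ℝ,
      (∫ x : ℝ in u₁..u₂, h ((x:ℂ) + ((-ψ₂:ℝ):ℂ) * Complex.I)) -
        (∫ x : ℝ in u₁..u₂, h ((x:ℂ) + ((-ψ₁:ℝ):ℂ) * Complex.I)) +
        Complex.I • (∫ y : ℝ in (-ψ₂)..(-ψ₁), h ((u₂:ℂ) + (y:ℂ) * Complex.I)) -
        Complex.I • (∫ y : ℝ in (-ψ₂)..(-ψ₁), h ((u₁:ℂ) + (y:ℂ) * Complex.I)) = 0 := by
    intro u₁ u₂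
    have key := Complex.integral_boundary_rect_eq_zero_of_differentiableOn h
      (⟨u₁, -ψ₂⟩ : ℂ) (⟨u₂, -ψ₁⟩ : ℂ) ?_
    · simpa using key
    · refine hhdiff.mono ?_
      rintro w ⟨-, hw2⟩
      simp only [mem_setOf_eq]
      have : (uIcc (-ψ₂) (-ψ₁)) = Icc (-ψ₂) (-ψ₁) := uIcc_of_le (by linarith)
      rw [← this]
      exact hw2
  -- the vertical strip function is integrable over the strip
  set ν : Measure ℝ := volume.restrict (Ioc (-ψ₂) (-ψ₁)) with hνdef
  have hTmem : ∀ p : ℝ × ℝ, p.2 ∈ Icc (-ψ₂) (-ψ₁) →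
      ((p.1 : ℂ) + (p.2 : ℂ) * Complex.I) ∈ {w : ℂ | w.im ∈ Icc (-ψ₂) (-ψ₁)} := by
    intro p hp
    simp only [mem_setOf_eq, Complex.add_im, Complex.ofReal_im, Complex.mul_im,
      Complex.ofReal_re, Complex.I_im, Complex.I_re, mul_one, mul_zero, add_zero, zero_add]
    exact hp
  have hPcont : ContinuousOn (fun p : ℝ × ℝ => h ((p.1:ℂ) + (p.2:ℂ) * Complex.I))
      ((univ : Set ℝ) ×ˢ Icc (-ψ₂) (-ψ₁)) := by
    refine hhcont.comp (Continuous.continuousOn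
      ((Complex.continuous_ofReal.comp continuous_fst).add
        ((Complex.continuous_ofReal.comp continuous_snd).mul continuous_const))) ?_
    rintro ⟨x, y⟩ ⟨-, hy⟩
    exact hTmem (x, y) hy
  have hprodrestrict : volume.prod ν = (volume.prod volume).restrict
      ((univ : Set ℝ) ×ˢ Ioc (-ψ₂) (-ψ₁)) := by
    rw [hνdef, ← Measure.prod_restrict, Measure.restrict_univ]
  have hmeas2 : AEStronglyMeasurable (fun p : ℝ × ℝ => h ((p.1:ℂ) + (p.2:ℂ) * Complex.I))
      (volume.prod ν) := by
    rw [hprodrestrict]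
    exact (hPcont.mono (prod_mono_right Ioc_subset_Icc_self)).aestronglyMeasurable
      (MeasurableSet.univ.prod measurableSet_Ioc)
  -- uniform bound for the lintegral over each horizontal line
  set K₁ : ℝ≥0∞ := ∫⁻ t in Ioi (0:ℝ), ENNReal.ofReal (Real.exp (-2*δ*t)) with hK₁def
  have hK₁fin : K₁ < ⊤ := by
    rw [hK₁def]
    have hI : IntegrableOn (fun t : ℝ => Real.exp (-2*δ*t)) (Ioi 0) := by
      refine (exp_neg_integrableOn_Ioi 0 (show (0:ℝ) < 2*δ by linarith)).congr_fun
        (fun t _ => ?_) measurableSet_Ioi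
      congr 1
      ring
    refine lt_of_le_of_lt (lintegral_mono fun t => ?_) hI.2
    rw [← ofReal_norm]
    exact ENNReal.ofReal_le_ofReal ((Real.norm_eq_abs _) ▸ le_abs_self _)
  set K : ℝ≥0∞ := K₁ ^ (1/(2:ℝ)) * (ENNReal.ofReal C) ^ (1/(2:ℝ)) with hKdef
  have hKfin : K ≠ ⊤ := by
    rw [hKdef]
    exact (ENNReal.mul_lt_top (ENNReal.rpow_lt_top_of_nonneg (by norm_num) hK₁fin.ne)
      (ENNReal.rpow_lt_top_of_nonneg (by norm_num) ENNReal.ofReal_ne_top)).ne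
  have hinner_bound : ∀ ψ ∈ Icc ψ₁ ψ₂,
      (∫⁻ x : ℝ, (‖h ((x:ℂ) + ((-ψ:ℝ):ℂ) * Complex.I)‖₊ : ℝ≥0∞)) ≤ K := by
    intro ψ hψ
    have hψΙ : ψ ∈ Ioo 0 φ := hsub hψ
    set m : ℝ := (eS ψ * l).im with hmdef
    have hmneg : m ≤ -δ := hmδ ψ hψ
    have hFcont : Continuous (fun x : ℝ => F (((Real.exp x : ℝ):ℂ) * eS ψ)) := by
      refine hF.comp_continuous (by continuity) (fun x => ?_)
      exact mem_cone hψΙ (Real.exp_pos x).ne'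
    set a : ℝ → ℝ≥0∞ := fun x =>
      ENNReal.ofReal (Real.exp (x/2) * Real.exp (Real.exp x * m)) with hadef
    set b : ℝ → ℝ≥0∞ := fun x =>
      ENNReal.ofReal (Real.exp (x/2)) * (‖F (((Real.exp x : ℝ):ℂ) * eS ψ)‖₊ : ℝ≥0∞) with hbdef
    have heq : ∀ x : ℝ, (‖h ((x:ℂ) + ((-ψ:ℝ):ℂ) * Complex.I)‖₊ : ℝ≥0∞) = a x * b x := by
      intro x
      have hreal : ‖h ((x:ℂ) + ((-ψ:ℝ):ℂ) * Complex.I)‖ =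
          (Real.exp (x/2) * Real.exp (Real.exp x * m)) *
            (Real.exp (x/2) * ‖F (((Real.exp x : ℝ):ℂ) * eS ψ)‖) := by
        rw [hrel ψ x, norm_smul, Real.norm_eq_abs, abs_of_pos (Real.exp_pos x), hgdef]
        simp only
        rw [norm_integrand, ← hmdef,
          show Real.exp x = Real.exp (x/2) * Real.exp (x/2) by rw [← Real.exp_add]; ring_nf]
        ring
      have hab : a x * b x = ENNReal.ofReal ((Real.exp (x/2) * Real.exp (Real.exp x * m)) *
          (Real.exp (x/2) * ‖F (((Real.exp x : ℝ):ℂ) * eS ψ)‖)) := by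
        rw [hadef, hbdef]
        simp only
        rw [← ofReal_norm_eq_coe_nnnorm, ← ENNReal.ofReal_mul (Real.exp_pos _).le,
          ← ENNReal.ofReal_mul (by positivity)]
      rw [← ofReal_norm_eq_coe_nnnorm, hreal, hab]
    have hameas : AEMeasurable a volume := by
      refine Continuous.aemeasurable ?_
      exact ENNReal.continuous_ofReal.comp (by continuity)
    have hbmeas : AEMeasurable b volume := by
      refine AEMeasurable.fun_mul ?_ ?_
      · exact (ENNReal.continuous_ofReal.comp (by continuity)).aemeasurable
      · exact hFcont.aestronglyMeasurable.enorm
    have hpq : Real.HolderConjugate 2 2 := Real.HolderConjugate.two_two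
    have holder := ENNReal.lintegral_mul_le_Lp_mul_Lq volume hpq hameas hbmeas
    have hA : ∫⁻ x : ℝ, a x ^ (2:ℝ) ≤ K₁ := by
      have hsubst : ∫⁻ x : ℝ, a x ^ (2:ℝ) =
          ∫⁻ t in Ioi (0:ℝ), ENNReal.ofReal (Real.exp (2*m*t)) := by
        rw [lintegral_image_exp (fun t => ENNReal.ofReal (Real.exp (2*m*t)))]
        refine lintegral_congr fun x => ?_
        have h2 : ∀ c : ℝ≥0∞, c ^ (2:ℝ) = c ^ (2:ℕ) := fun c => by
          rw [← ENNReal.rpow_natCast]; norm_num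
        rw [h2, hadef]
        simp only
        rw [← ENNReal.ofReal_pow (by positivity), ← ENNReal.ofReal_mul (Real.exp_pos x).le]
        congr 1
        rw [mul_pow, ← Real.exp_nat_mul, ← Real.exp_nat_mul]
        congr 1
        · congr 1; push_cast; ring
        · congr 1; push_cast; ring
      rw [hsubst, hK₁def]
      refine lintegral_mono_ae ?_
      rw [ae_restrict_iff' measurableSet_Ioi]
      filter_upwards with t ht
      refine ENNReal.ofReal_le_ofReal (Real.exp_le_exp.mpr ?_)
      have ht' : 0 < t := ht
      nlinarith
    have hB : ∫⁻ x : ℝ, b x ^ (2:ℝ) ≤ ENNReal.ofReal C := by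
      have hsubst : ∫⁻ x : ℝ, b x ^ (2:ℝ) =
          ∫⁻ t in Ioi (0:ℝ), (‖F ((t:ℂ) * eS ψ)‖₊ : ℝ≥0∞) ^ (2:ℝ) := by
        rw [lintegral_image_exp (fun t => (‖F ((t:ℂ) * eS ψ)‖₊ : ℝ≥0∞) ^ (2:ℝ))]
        refine lintegral_congr fun x => ?_
        have h2 : ∀ c : ℝ≥0∞, c ^ (2:ℝ) = c ^ (2:ℕ) := fun c => by
          rw [← ENNReal.rpow_natCast]; norm_num
        rw [h2, h2, hbdef]
        simp only
        rw [mul_pow, ← ENNReal.ofReal_pow (Real.exp_pos _).le]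
        congr 2
        rw [← Real.exp_nat_mul]
        congr 1
        push_cast
        ring
      rw [hsubst]
      calc ∫⁻ t in Ioi (0:ℝ), (‖F ((t:ℂ) * eS ψ)‖₊ : ℝ≥0∞) ^ (2:ℝ)
          = ∫⁻ t in Ioi (0:ℝ), (‖F ((t:ℂ) * eS ψ)‖₊ : ℝ≥0∞) ^ (2:ℕ) := by
            refine lintegral_congr fun t => ?_
            rw [← ENNReal.rpow_natCast]
            norm_num
        _ ≤ ∫⁻ t : ℝ, (‖F ((t:ℂ) * eS ψ)‖₊ : ℝ≥0∞) ^ (2:ℕ) := setLIntegral_le_lintegral _ _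
        _ ≤ ENNReal.ofReal C := hC ψ hψΙ
    calc ∫⁻ x : ℝ, (‖h ((x:ℂ) + ((-ψ:ℝ):ℂ) * Complex.I)‖₊ : ℝ≥0∞)
        = ∫⁻ x : ℝ, (a * b) x := by
          refine lintegral_congr fun x => ?_
          rw [heq x]; rfl
      _ ≤ (∫⁻ x : ℝ, a x ^ (2:ℝ)) ^ (1/(2:ℝ)) * (∫⁻ x : ℝ, b x ^ (2:ℝ)) ^ (1/(2:ℝ)) := holder
      _ ≤ K₁ ^ (1/(2:ℝ)) * (ENNReal.ofReal C) ^ (1/(2:ℝ)) := by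
          exact mul_le_mul' (ENNReal.rpow_le_rpow hA (by norm_num))
            (ENNReal.rpow_le_rpow hB (by norm_num))
      _ = K := hKdef.symm
  -- integrability of the 2D function
  have hint2 : Integrable (fun p : ℝ × ℝ => h ((p.1:ℂ) + (p.2:ℂ) * Complex.I))
      (volume.prod ν) := by
    refine ⟨hmeas2, ?_⟩
    show (∫⁻ p : ℝ × ℝ, ‖h ((p.1:ℂ) + (p.2:ℂ) * Complex.I)‖ₑ ∂(volume.prod ν)) < ⊤
    rw [lintegral_prod_symm _ hmeas2.enorm]
    calc (∫⁻ y : ℝ, ∫⁻ x : ℝ, (‖h ((x:ℂ) + (y:ℂ) * Complex.I)‖₊ : ℝ≥0∞) ∂volume ∂ν)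
        ≤ ∫⁻ _ : ℝ, K ∂ν := by
          refine lintegral_mono_ae ?_
          rw [hνdef, ae_restrict_iff' measurableSet_Ioc]
          filter_upwards with y hy
          have h1' : -y ∈ Icc ψ₁ ψ₂ := ⟨by have := hy.2; linarith, by have := hy.1; linarith⟩
          have := hinner_bound (-y) h1'
          simpa using this
      _ = K * ν univ := lintegral_const K
      _ < ⊤ := by
          refine ENNReal.mul_lt_top hKfin.lt_top ?_
          rw [hνdef, Measure.restrict_apply_univ]
          exact measure_Ioc_lt_top
  -- the integrated side function
  set S : ℝ → ℝ := fun u => ∫ y, ‖h ((u:ℂ) + (y:ℂ) * Complex.I)‖ ∂ν with hSdef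
  have hSint : Integrable S := hint2.integral_norm_prod_left
  have hSnn : ∀ u, 0 ≤ S u := fun u => integral_nonneg fun y => norm_nonneg _
  have hside : ∀ u : ℝ,
      ‖Complex.I • ∫ y in (-ψ₂)..(-ψ₁), h ((u:ℂ) + (y:ℂ) * Complex.I)‖ ≤ S u := by
    intro u
    rw [norm_smul, Complex.norm_I, one_mul]
    refine le_trans (intervalIntegral.norm_integral_le_integral_norm (by linarith)) ?_
    rw [intervalIntegral.integral_of_le (by linarith : -ψ₂ ≤ -ψ₁)]
  -- choose good sequences going to ±∞
  have hseqTop : ∀ n : ℕ, ∃ u : ℝ, (n:ℝ) < u ∧ S u < 1/((n:ℝ)+1) := by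
    intro n
    by_contra hcon
    push_neg at hcon
    have hconst : IntegrableOn (fun _ : ℝ => 1/((n:ℝ)+1)) (Ioi (n:ℝ)) := by
      refine Integrable.mono' hSint.integrableOn aestronglyMeasurable_const ?_
      rw [ae_restrict_iff' measurableSet_Ioi]
      filter_upwards with u hu
      rw [Real.norm_eq_abs, _root_.abs_of_pos (by positivity)]
      exact hcon u hu
    rcases (integrableOn_const_iff (C := 1/((n:ℝ)+1))).mp hconst with hc | hvol
    · have : (0:ℝ) < 1/((n:ℝ)+1) := by positivity
      rw [enorm_eq_zero] at hc
      exact this.ne' hc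
    · rw [Real.volume_Ioi] at hvol
      exact lt_irrefl _ hvol
  have hseqBot : ∀ n : ℕ, ∃ u : ℝ, u < -(n:ℝ) ∧ S u < 1/((n:ℝ)+1) := by
    intro n
    by_contra hcon
    push_neg at hcon
    have hconst : IntegrableOn (fun _ : ℝ => 1/((n:ℝ)+1)) (Iio (-(n:ℝ))) := by
      refine Integrable.mono' hSint.integrableOn aestronglyMeasurable_const ?_
      rw [ae_restrict_iff' measurableSet_Iio]
      filter_upwards with u hu
      rw [Real.norm_eq_abs, _root_.abs_of_pos (by positivity)]
      exact hcon u hu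
    rcases (integrableOn_const_iff (C := 1/((n:ℝ)+1))).mp hconst with hc | hvol
    · have : (0:ℝ) < 1/((n:ℝ)+1) := by positivity
      rw [enorm_eq_zero] at hc
      exact this.ne' hc
    · rw [Real.volume_Iio] at hvol
      exact lt_irrefl _ hvol
  choose uT huT hST using hseqTop
  choose uB huB hSB using hseqBot
  have htT : Tendsto uT atTop atTop :=
    tendsto_atTop_mono (fun n => (huT n).le) tendsto_natCast_atTop_atTop
  have htB : Tendsto uB atTop atBot := by
    refine tendsto_atBot_mono (fun n => (huB n).le) ?_
    exact tendsto_neg_atBot_iff.mpr tendsto_natCast_atTop_atTop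
  have hSz : Tendsto (fun n : ℕ => 1/((n:ℝ)+1)) atTop (𝓝 0) :=
    tendsto_one_div_add_atTop_nhds_zero_nat
  have hRT : Tendsto (fun n => Complex.I •
      ∫ y in (-ψ₂)..(-ψ₁), h (((uT n):ℂ) + (y:ℂ) * Complex.I)) atTop (𝓝 0) := by
    rw [tendsto_zero_iff_norm_tendsto_zero]
    exact squeeze_zero (fun n => norm_nonneg _)
      (fun n => le_trans (hside (uT n)) (hST n).le) hSz
  have hRB : Tendsto (fun n => Complex.I •
      ∫ y in (-ψ₂)..(-ψ₁), h (((uB n):ℂ) + (y:ℂ) * Complex.I)) atTop (𝓝 0) := by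
    rw [tendsto_zero_iff_norm_tendsto_zero]
    exact squeeze_zero (fun n => norm_nonneg _)
      (fun n => le_trans (hside (uB n)) (hSB n).le) hSz
  have hmem1 : ψ₁ ∈ Icc ψ₁ ψ₂ := ⟨le_refl _, h12⟩
  have hmem2 : ψ₂ ∈ Icc ψ₁ ψ₂ := ⟨h12, le_refl _⟩
  have hlim1 : Tendsto (fun n => ∫ x in (uB n)..(uT n), h ((x:ℂ) + ((-ψ₁:ℝ):ℂ) * Complex.I))
      atTop (𝓝 (∫ x : ℝ, h ((x:ℂ) + ((-ψ₁:ℝ):ℂ) * Complex.I))) :=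
    intervalIntegral_tendsto_integral (hhint ψ₁ hmem1) htB htT
  have hlim2 : Tendsto (fun n => ∫ x in (uB n)..(uT n), h ((x:ℂ) + ((-ψ₂:ℝ):ℂ) * Complex.I))
      atTop (𝓝 (∫ x : ℝ, h ((x:ℂ) + ((-ψ₂:ℝ):ℂ) * Complex.I))) :=
    intervalIntegral_tendsto_integral (hhint ψ₂ hmem2) htB htT
  have hkey : ∀ n : ℕ, (∫ x in (uB n)..(uT n), h ((x:ℂ) + ((-ψ₁:ℝ):ℂ) * Complex.I)) =
      (∫ x in (uB n)..(uT n), h ((x:ℂ) + ((-ψ₂:ℝ):ℂ) * Complex.I)) +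
      Complex.I • (∫ y in (-ψ₂)..(-ψ₁), h (((uT n):ℂ) + (y:ℂ) * Complex.I)) -
      Complex.I • (∫ y in (-ψ₂)..(-ψ₁), h (((uB n):ℂ) + (y:ℂ) * Complex.I)) := by
    intro n
    have e := hrect (uB n) (uT n)
    rw [eq_comm, ← sub_eq_zero, ← e]
    abel
  have hfinal : (∫ x : ℝ, h ((x:ℂ) + ((-ψ₁:ℝ):ℂ) * Complex.I)) =
      (∫ x : ℝ, h ((x:ℂ) + ((-ψ₂:ℝ):ℂ) * Complex.I)) + 0 - 0 := by
    refine tendsto_nhds_unique (hlim1.congr hkey) ?_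
    exact (hlim2.add hRT).sub hRB
  rw [add_zero, sub_zero] at hfinal
  show (∫ t in Ioi (0:ℝ), g ψ₁ t) = ∫ t in Ioi (0:ℝ), g ψ₂ t
  rw [hval ψ₁ hmem1, hval ψ₂ hmem2, hfinal]

/-! ### differentiability of the Laplace transform in the parameter -/

open Metric in
set_option maxHeartbeats 1000000 in
lemma A_differentiableAt {X : Type*} [NormedAddCommGroup X] [NormedSpace ℂ X] [CompleteSpace X]
    {φ : ℝ} {F : ℂ → X} (hF : ContinuousOn F (doubleConeDown φ)) {C : ℝ}
    (hC : ∀ ψ ∈ Ioo 0 φ, ∫⁻ t : ℝ, (‖F ((t:ℂ) * eS ψ)‖₊ : ℝ≥0∞) ^ 2 ≤ ENNReal.ofReal C)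
    {ψ : ℝ} (hψ : ψ ∈ Ioo 0 φ) {l₀ : ℂ} (hm : (eS ψ * l₀).im < 0) :
    DifferentiableAt ℂ (fun l : ℂ => ∫ t in Ioi (0:ℝ),
      (Complex.exp (-Complex.I * l * ((t:ℂ) * eS ψ)) * eS ψ) • F ((t:ℂ) * eS ψ)) l₀ := by
  set m₀ : ℝ := (eS ψ * l₀).im with hm₀def
  set ε : ℝ := -m₀/2 with hεdef
  have hε : 0 < ε := by rw [hεdef]; linarith
  set G : ℂ → ℝ → X := fun l t =>
    (Complex.exp (-Complex.I * l * ((t:ℂ) * eS ψ)) * eS ψ) • F ((t:ℂ) * eS ψ) with hGdef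
  set G' : ℂ → ℝ → X := fun l t =>
    ((Complex.exp (-Complex.I * l * ((t:ℂ) * eS ψ)) * (-Complex.I * 1 * ((t:ℂ) * eS ψ))) *
      eS ψ) • F ((t:ℂ) * eS ψ) with hG'def
  have hmle : ∀ l ∈ ball l₀ ε, (eS ψ * l).im ≤ m₀/2 := by
    intro l hl
    have him : (eS ψ * l).im = m₀ + (eS ψ * (l - l₀)).im := by
      rw [hm₀def, ← Complex.add_im, ← mul_add]
      ring_nf
    have habs : (eS ψ * (l - l₀)).im ≤ ε := by
      calc (eS ψ * (l - l₀)).im ≤ |(eS ψ * (l - l₀)).im| := le_abs_self _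
        _ ≤ ‖eS ψ * (l - l₀)‖ := Complex.abs_im_le_norm _
        _ = ‖l - l₀‖ := by rw [norm_mul, abs_eS, one_mul]
        _ ≤ ε := by
            have := mem_ball_iff_norm.mp hl
            exact this.le
    rw [him]
    rw [hεdef] at habs
    linarith
  have hG'norm : ∀ l : ℂ, ∀ t : ℝ,
      ‖G' l t‖ = Real.exp (t * (eS ψ * l).im) * |t| * ‖F ((t:ℂ) * eS ψ)‖ := by
    intro l t
    rw [hG'def]
    simp only
    simp only [norm_smul, norm_mul, abs_eS, abs_cexp_phase,
      Complex.norm_real, Real.norm_eq_abs, Complex.norm_I, norm_one, norm_neg, mul_one, one_mul]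
  have h_bound : ∀ᵐ t ∂(volume.restrict (Ioi (0:ℝ))), ∀ l ∈ ball l₀ ε,
      ‖G' l t‖ ≤ (t * Real.exp ((m₀/2) * t)) * ‖F ((t:ℂ) * eS ψ)‖ := by
    rw [ae_restrict_iff' measurableSet_Ioi]
    filter_upwards with t ht
    intro l hl
    rw [hG'norm l t, abs_of_pos (show (0:ℝ) < t from ht)]
    have : Real.exp (t * (eS ψ * l).im) ≤ Real.exp ((m₀/2) * t) := by
      refine Real.exp_le_exp.mpr ?_
      have := hmle l hl
      have ht' : (0:ℝ) < t := ht
      nlinarith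
    calc Real.exp (t * (eS ψ * l).im) * t * ‖F ((t:ℂ) * eS ψ)‖
        ≤ Real.exp ((m₀/2) * t) * t * ‖F ((t:ℂ) * eS ψ)‖ := by
          refine mul_le_mul_of_nonneg_right (mul_le_mul_of_nonneg_right this
            (le_of_lt ht)) (norm_nonneg _)
      _ = (t * Real.exp ((m₀/2) * t)) * ‖F ((t:ℂ) * eS ψ)‖ := by ring
  have h_diff : ∀ᵐ t ∂(volume.restrict (Ioi (0:ℝ))), ∀ l ∈ ball l₀ ε,
      HasDerivAt (fun l' => G l' t) (G' l t) l := by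
    filter_upwards with t
    intro l _
    have hd1 : HasDerivAt (fun l' : ℂ => -Complex.I * l' * ((t:ℂ) * eS ψ))
        (-Complex.I * 1 * ((t:ℂ) * eS ψ)) l :=
      (((hasDerivAt_id l).const_mul (-Complex.I)).mul_const ((t:ℂ) * eS ψ))
    have hd2 := hd1.cexp
    have hd3 := hd2.mul_const (eS ψ)
    have hd4 := hd3.smul_const (F ((t:ℂ) * eS ψ))
    exact hd4
  have hF_meas : ∀ᶠ l in 𝓝 l₀, AEStronglyMeasurable (G l) (volume.restrict (Ioi (0:ℝ))) :=
    Filter.Eventually.of_forall fun l =>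
      (contOn_integrand hF hψ l).aestronglyMeasurable measurableSet_Ioi
  have hF_int : Integrable (G l₀) (volume.restrict (Ioi (0:ℝ))) :=
    integrand_integrableOn hF hC hψ hm
  have hF'_meas : AEStronglyMeasurable (G' l₀) (volume.restrict (Ioi (0:ℝ))) := by
    rw [hG'def]
    refine ContinuousOn.aestronglyMeasurable ?_ measurableSet_Ioi
    exact (Continuous.continuousOn (by continuity)).smul (contOn_ray hF hψ)
  have hbound_int : Integrable (fun t : ℝ => (t * Real.exp ((m₀/2) * t)) * ‖F ((t:ℂ) * eS ψ)‖)
      (volume.restrict (Ioi (0:ℝ))) :=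
    deriv_bound_integrableOn hF hC hψ (show m₀/2 < 0 by linarith)
  have key := hasDerivAt_integral_of_dominated_loc_of_deriv_le (ball_mem_nhds l₀ hε) hF_meas hF_int hF'_meas
    h_bound hbound_int h_diff
  exact key.2.differentiableAt

set_option maxHeartbeats 1000000 in
set_option maxHeartbeats 1000000 in
/-- gluing lemma, Lemma l4(i): if `F ∈ H⁰(K^φ; X)` (analytic on the
cone with uniformly bounded `L²` norms on the lines `e^{-iψ}ℝ`) vanishes on the
upper nappe, then there is one analytic function `ℱ` on `⋃_{0<ψ<φ} e^{iψ}ℂ⁻` which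
on each rotated half-plane `e^{iψ}ℂ⁻` is given by the absolutely convergent inverse
Fourier–Laplace integral of the restriction of `F` to the ray `e^{-iψ}ℝ⁺`. -/
theorem stmt18 {X : Type*} [NormedAddCommGroup X] [InnerProductSpace ℂ X] [CompleteSpace X]
    (φ : ℝ) (hφ0 : 0 < φ) (hφπ : φ ≤ Real.pi) (F : ℂ → X)
    (hanal : DifferentiableOn ℂ F (doubleConeDown φ))
    (hHardy : ∃ C : ℝ, ∀ ψ ∈ Set.Ioo 0 φ,
      ∫⁻ t : ℝ, (‖F ((t : ℂ) * Complex.exp (-Complex.I * ψ))‖₊ : ℝ≥0∞) ^ 2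
        ≤ ENNReal.ofReal C)
    (hvanish : ∀ z ∈ doubleConeDown φ, 0 < z.im → F z = 0) :
    ∃ ℱ : ℂ → X,
      DifferentiableOn ℂ ℱ
        {l : ℂ | ∃ ψ ∈ Set.Ioo 0 φ, (Complex.exp (-Complex.I * ψ) * l).im < 0} ∧
      ∀ ψ ∈ Set.Ioo 0 φ, ∀ l : ℂ, (Complex.exp (-Complex.I * ψ) * l).im < 0 →
        MeasureTheory.IntegrableOn (fun t : ℝ =>
          (Complex.exp (-Complex.I * l * ((t : ℂ) * Complex.exp (-Complex.I * ψ)))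
            * Complex.exp (-Complex.I * ψ)) • F ((t : ℂ) * Complex.exp (-Complex.I * ψ)))
          (Set.Ioi 0) ∧
        ℱ l = (Real.sqrt (2 * Real.pi))⁻¹ •
          ∫ t : ℝ in Set.Ioi 0,
            (Complex.exp (-Complex.I * l * ((t : ℂ) * Complex.exp (-Complex.I * ψ)))
              * Complex.exp (-Complex.I * ψ)) • F ((t : ℂ) * Complex.exp (-Complex.I * ψ)) := by

  obtain ⟨C, hHardyC⟩ := hHardy
  have hF : ContinuousOn F (doubleConeDown φ) := hanal.continuousOn
  have hC : ∀ ψ ∈ Ioo 0 φ, ∫⁻ t : ℝ, (‖F ((t:ℂ) * eS ψ)‖₊ : ℝ≥0∞) ^ 2 ≤ ENNReal.ofReal C :=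
    hHardyC
  set A : ℝ → ℂ → X := fun ψ l => ∫ t in Ioi (0:ℝ),
    (Complex.exp (-Complex.I * l * ((t:ℂ) * eS ψ)) * eS ψ) • F ((t:ℂ) * eS ψ) with hAdef
  have hcons : ∀ (l : ℂ) (ψ ψ' : ℝ), ψ ∈ Ioo 0 φ → ψ' ∈ Ioo 0 φ →
      (eS ψ * l).im < 0 → (eS ψ' * l).im < 0 → A ψ l = A ψ' l := by
    intro l ψ ψ' hψ hψ' hm hm'
    rcases le_total ψ ψ' with hle | hle
    · exact consistency hφπ hanal hC l hψ hψ' hle hm hm'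
    · exact (consistency hφπ hanal hC l hψ' hψ hle hm' hm).symm
  classical
  set ℱ : ℂ → X := fun l =>
    if hl : ∃ ψ ∈ Ioo 0 φ, (eS ψ * l).im < 0 then
      (Real.sqrt (2 * Real.pi))⁻¹ • A hl.choose l
    else 0 with hℱdef
  have hℱval : ∀ ψ ∈ Ioo 0 φ, ∀ l : ℂ, (eS ψ * l).im < 0 →
      ℱ l = (Real.sqrt (2 * Real.pi))⁻¹ • A ψ l := by
    intro ψ hψ l hm
    have hl : ∃ ψ ∈ Ioo 0 φ, (eS ψ * l).im < 0 := ⟨ψ, hψ, hm⟩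
    rw [hℱdef]
    simp only [dif_pos hl]
    congr 1
    exact hcons l hl.choose ψ hl.choose_spec.1 hψ hl.choose_spec.2 hm
  refine ⟨ℱ, ?_, ?_⟩
  · intro l₀ hl₀
    obtain ⟨ψ₀, hψ₀, hm₀⟩ := hl₀
    have hopen : IsOpen {l : ℂ | (eS ψ₀ * l).im < 0} :=
      isOpen_lt (Complex.continuous_im.comp (continuous_const.mul continuous_id))
        continuous_const
    have hAdiff : DifferentiableAt ℂ (fun l => (Real.sqrt (2 * Real.pi))⁻¹ • A ψ₀ l) l₀ :=
      (A_differentiableAt hF hC hψ₀ hm₀).const_smul _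
    have heq : ℱ =ᶠ[𝓝 l₀] fun l => (Real.sqrt (2 * Real.pi))⁻¹ • A ψ₀ l := by
      filter_upwards [hopen.mem_nhds hm₀] with l hl using hℱval ψ₀ hψ₀ l hl
    exact (hAdiff.congr_of_eventuallyEq heq).differentiableWithinAt
  · intro ψ hψ l hm
    exact ⟨integrand_integrableOn hF hC hψ hm, hℱval ψ hψ l hm⟩
end
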